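/- arXiv:2510.00712 — 5 statements merged into one kernel-verified Lean document; each statement's English description precedes it below -/
import Mathlib

section
/- For a tree T on n vertices (n ≥ 1) and any integer k with 0 ≤ k ≤ n−2, there exists a 2-coloring of the vertices of T such that exactly k edges of T are monochromatic (i.e., join two vertices of the same color). -/
/-- The number of monochromatic ("bad") edges of `G` under the vertex coloring `c`:
edges whose two endpoints receive the same color. -/
noncomputable def badCount {V : Type*} {α : Type*} (G : SimpleGraph V) (c : V → α) : ℕ :=
  {e ∈ G.edgeSet | (Sym2.map c e).IsDiag}.ncard

section Aux

open Classical
open Fin.NatCast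

variable {V : Type*} {T : SimpleGraph V} (hT : T.IsTree)

/-- The unique path (as a walk) from `r` to `v` in the tree `T`. -/
noncomputable def treePath (hT : T.IsTree) (r v : V) : T.Walk r v :=
  (hT.existsUnique_path r v).choose

lemma treePath_isPath (r v : V) : (treePath hT r v).IsPath :=
  (hT.existsUnique_path r v).choose_spec.1

lemma treePath_unique {r v : V} {p : T.Walk r v} (hp : p.IsPath) :
    p = treePath hT r v :=
  (hT.existsUnique_path r v).choose_spec.2 p hp

/-- Parity coloring: color of `v` is the parity of the number of edges outside `S`
on the unique path from `r` to `v`. -/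
noncomputable def treeColor (hT : T.IsTree) (r : V) (S : Set (Sym2 V)) (v : V) : Fin 2 :=
  (((treePath hT r v).edges.countP (fun e => decide (e ∉ S)) : ℕ) : Fin 2)

lemma treePath_edges_of_mem_support {r u v : V} (h : T.Adj u v)
    (hmem : v ∈ (treePath hT r u).support) :
    (treePath hT r u).edges = (treePath hT r v).edges ++ [s(u, v)] := by
  set p := treePath hT r u with hp
  have hpath : p.IsPath := treePath_isPath hT r u
  have h1 : p.takeUntil v hmem = treePath hT r v :=
    treePath_unique hT (hpath.takeUntil hmem)
  have hcons : (SimpleGraph.Walk.cons h.symm SimpleGraph.Walk.nil : T.Walk v u).IsPath := by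
    simp [SimpleGraph.Walk.isPath_def, h.ne']
  have h2 : p.dropUntil v hmem = SimpleGraph.Walk.cons h.symm SimpleGraph.Walk.nil :=
    (hT.existsUnique_path v u).unique (hpath.dropUntil hmem) hcons
  have h3 := SimpleGraph.Walk.take_spec p hmem
  calc p.edges = ((p.takeUntil v hmem).append (p.dropUntil v hmem)).edges := by rw [h3]
    _ = (p.takeUntil v hmem).edges ++ (p.dropUntil v hmem).edges :=
        SimpleGraph.Walk.edges_append _ _
    _ = (treePath hT r v).edges ++ [s(u, v)] := by
        rw [h1, h2]; simp [Sym2.eq_swap]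

lemma treePath_edges_cases {r u v : V} (h : T.Adj u v) :
    (treePath hT r u).edges = (treePath hT r v).edges ++ [s(u, v)] ∨
    (treePath hT r v).edges = (treePath hT r u).edges ++ [s(u, v)] := by
  by_cases hmem : v ∈ (treePath hT r u).support
  · exact Or.inl (treePath_edges_of_mem_support hT h hmem)
  · right
    have hpath : (treePath hT r u).IsPath := treePath_isPath hT r u
    have hconcat : ((treePath hT r u).concat h).IsPath := by
      rw [SimpleGraph.Walk.isPath_def, SimpleGraph.Walk.support_concat]
      rw [List.nodup_append]
      refine ⟨hpath.support_nodup, List.nodup_singleton v, ?_⟩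
      intro a ha b hb hab
      simp only [List.mem_singleton] at hb
      subst hb
      subst hab
      exact hmem ha
    have := treePath_unique hT hconcat
    rw [← this, SimpleGraph.Walk.edges_concat, List.concat_eq_append]

lemma treeColor_eq_iff {r u v : V} (S : Set (Sym2 V)) (h : T.Adj u v) :
    treeColor hT r S u = treeColor hT r S v ↔ s(u, v) ∈ S := by
  have key : ∀ (a b : V) (_ : (treePath hT r a).edges
      = (treePath hT r b).edges ++ [s(u, v)]),
      (treeColor hT r S a = treeColor hT r S b ↔ s(u, v) ∈ S) := by
    intro a b hab
    unfold treeColor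
    rw [hab, List.countP_append]
    by_cases hS : s(u, v) ∈ S
    · simp [hS]
    · simp only [List.countP_cons, List.countP_nil, hS, not_false_iff, 
        Nat.zero_add, decide_eq_true_eq, if_true]
      rw [Nat.cast_add, Nat.cast_one]
      constructor
      · intro hh
        exfalso
        have := hh.symm
        rw [left_eq_add] at this
        exact one_ne_zero this
      · intro hh; exact hh.elim
  rcases treePath_edges_cases hT h with hc | hc
  · exact key u v hc
  · rw [eq_comm]; exact key v u hc

end Aux

/-- For a tree `T` on `n ≥ 1` vertices and any `0 ≤ k ≤ n - 2`, there is a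
2-coloring of the vertices with exactly `k` monochromatic edges. -/
theorem tree_two_coloring_exact_bad_edges {V : Type*} [Fintype V]
    (T : SimpleGraph V) (hT : T.IsTree) (n : ℕ) (hn : Fintype.card V = n)
    (hn1 : 1 ≤ n) (k : ℕ) (hk : k ≤ n - 2) :
    ∃ c : V → Fin 2, badCount T c = k := by
  classical
  have hcard : T.edgeFinset.card + 1 = n := by rw [← hn]; exact hT.card_edgeFinset
  have hkle : k ≤ T.edgeFinset.card := by omega
  obtain ⟨S, hSsub, hScard⟩ := Finset.exists_subset_card_eq hkle
  have hne : Nonempty V := by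
    rw [← Fintype.card_pos_iff, hn]; exact hn1
  obtain ⟨r⟩ := hne
  refine ⟨treeColor hT r (↑S : Set (Sym2 V)), ?_⟩
  have hset : {e ∈ T.edgeSet | (Sym2.map (treeColor hT r (↑S : Set (Sym2 V))) e).IsDiag}
      = (↑S : Set (Sym2 V)) := by
    ext e
    induction e using Sym2.ind with
    | _ u v =>
      simp only [Set.mem_setOf_eq, Sym2.map_pair_eq, Sym2.mk_isDiag_iff,
        SimpleGraph.mem_edgeSet, Finset.mem_coe]
      constructor
      · rintro ⟨hadj, hcc⟩
        have := (treeColor_eq_iff hT (↑S : Set (Sym2 V)) hadj).mp hcc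
        exact this
      · intro hS
        have hedge : s(u, v) ∈ T.edgeFinset := hSsub hS
        have hadj : T.Adj u v := by
          rwa [SimpleGraph.mem_edgeFinset, SimpleGraph.mem_edgeSet] at hedge
        exact ⟨hadj, (treeColor_eq_iff hT (↑S : Set (Sym2 V)) hadj).mpr hS⟩
  rw [badCount, hset, Set.ncard_coe_finset, hScard]
end

section
/- For the wheel W_n on n > 3 vertices (a cycle on n−1 vertices plus a center adjacent to all cycle vertices), every 2-coloring of the vertices has at least ⌊n/2⌋ monochromatic edges. -/
/-- The wheel graph with hub `none` and rim cycle on `Fin m` (for `m ≥ 3`);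
this is `W_n` with `n = m + 1` vertices and `2m = 2n - 2` edges. -/
def wheelGraph (m : ℕ) : SimpleGraph (Option (Fin m)) where
  Adj v w :=
    (v = none ∧ w ≠ none) ∨ (w = none ∧ v ≠ none) ∨
      (∃ a b : Fin m, v = some a ∧ w = some b ∧ a ≠ b ∧
        ((a.val + 1) % m = b.val ∨ (b.val + 1) % m = a.val))
  symm := by
    constructor
    rintro v w (⟨h1, h2⟩ | ⟨h1, h2⟩ | ⟨a, b, h1, h2, h3, h4⟩)
    · exact Or.inr (Or.inl ⟨h1, h2⟩)
    · exact Or.inl ⟨h1, h2⟩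
    · exact Or.inr (Or.inr ⟨b, a, h2, h1, h3.symm, h4.symm⟩)
  loopless := by
    constructor
    rintro v (⟨h1, h2⟩ | ⟨h1, h2⟩ | ⟨a, b, h1, h2, h3, h4⟩)
    · exact h2 h1
    · exact h2 h1
    · subst h1; exact h3 (Option.some_injective _ h2)

open Finset in
/-- Key counting lemma on the rim: the rim vertices colored like the hub together with
the monochromatic rim edges number at least `⌈m/2⌉`. -/
lemma wheel_key_count (m : ℕ) [NeZero m] (d : Fin m → Fin 2) (X : Fin 2) :
    (m + 1) / 2 ≤ (univ.filter (fun a => d a = X)).card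
      + (univ.filter (fun a => d a = d (a + 1))).card := by
  classical
  set K := univ.filter (fun a : Fin m => d a = X) with hK
  set K' := univ.filter (fun a : Fin m => d (a + 1) = X) with hK'
  set R := univ.filter (fun a : Fin m => d a = d (a + 1)) with hR
  set B := univ.filter (fun a : Fin m => ¬ d a = d (a + 1)) with hB
  have hRB : R.card + B.card = m := by
    rw [hR, hB, Finset.card_filter_add_card_filter_not]
    simp
  have hKK' : K'.card = K.card := by
    apply Finset.card_bij' (fun a _ => a + 1) (fun a _ => a - 1)
    · intro a _; exact add_sub_cancel_right a 1
    · intro a _; exact sub_add_cancel a 1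
    · intro a ha
      simp only [hK', Finset.mem_filter] at ha
      simp [hK, ha.2]
    · intro a ha
      simp only [hK, Finset.mem_filter] at ha
      simp [hK', ha.2]
  have hBsub : B ⊆ K ∪ K' := by
    intro a ha
    simp only [hB, Finset.mem_filter, Finset.mem_univ, true_and] at ha
    simp only [Finset.mem_union, hK, hK', Finset.mem_filter, Finset.mem_univ, true_and]
    have h1 := (d a).isLt
    have h2 := (d (a + 1)).isLt
    have h3 := X.isLt
    have h := Fin.ext_iff.not.mp ha
    rw [Fin.ext_iff, Fin.ext_iff]
    omega
  have hB2 : B.card ≤ 2 * K.card := by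
    calc B.card ≤ (K ∪ K').card := Finset.card_le_card hBsub
    _ ≤ K.card + K'.card := Finset.card_union_le _ _
    _ = 2 * K.card := by omega
  omega

open Finset in
/-- Every 2-coloring of the wheel `W_n` (`n > 3`) has at least `⌊n/2⌋` monochromatic
edges. -/
theorem wheel_two_coloring_bad_edges_lower_bound (n : ℕ) (hn : 3 < n)
    (c : Option (Fin (n - 1)) → Fin 2) :
    n / 2 ≤ badCount (wheelGraph (n - 1)) c := by
  classical
  have hm : 3 ≤ n - 1 := by omega
  haveI : NeZero (n - 1) := ⟨by omega⟩
  have hval1 : (1 : Fin (n - 1)).val = 1 := by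
    rw [Fin.val_one', Nat.mod_eq_of_lt (by omega)]
  have hvadd : ∀ a : Fin (n - 1), ((a + 1 : Fin (n - 1))).val = (a.val + 1) % (n - 1) := by
    intro a; rw [Fin.val_add, hval1]
  have hsplit : ∀ a : Fin (n - 1),
      ((a + 1 : Fin (n - 1))).val = a.val + 1 ∨
        ((a + 1 : Fin (n - 1))).val = 0 ∧ a.val + 1 = n - 1 := by
    intro a
    rw [hvadd]
    rcases Nat.lt_or_ge (a.val + 1) (n - 1) with h | h
    · left; exact Nat.mod_eq_of_lt h
    · right
      have := a.isLt
      have he : a.val + 1 = n - 1 := by omega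
      rw [he, Nat.mod_self]
      exact ⟨rfl, rfl⟩
  set Bad : Set (Sym2 (Option (Fin (n - 1)))) :=
    {e ∈ (wheelGraph (n - 1)).edgeSet | (Sym2.map c e).IsDiag} with hBad
  set S : Finset (Sym2 (Option (Fin (n - 1)))) :=
    (univ.filter (fun a : Fin (n - 1) => c (some a) = c none)).image
      (fun a => s(none, some a)) with hS
  set R : Finset (Sym2 (Option (Fin (n - 1)))) :=
    (univ.filter (fun a : Fin (n - 1) => c (some a) = c (some (a + 1)))).image
      (fun a => s(some a, some (a + 1))) with hR
  have hspokeinj : Function.Injective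
      (fun a : Fin (n - 1) => (s(none, some a) : Sym2 (Option (Fin (n - 1))))) := by
    intro a b hab
    simp only [Sym2.eq_iff] at hab
    rcases hab with ⟨_, h⟩ | ⟨h, _⟩
    · exact Option.some_injective _ h
    · exact absurd h (by simp)
  have hne : ∀ a : Fin (n - 1), a ≠ a + 1 := by
    intro a h
    have h2 := congrArg Fin.val h
    have h3 := a.isLt
    rcases hsplit a with h4 | ⟨h4, h5⟩ <;> omega
  have hriminj : Function.Injective
      (fun a : Fin (n - 1) => (s(some a, some (a + 1)) : Sym2 (Option (Fin (n - 1))))) := by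
    intro a b hab
    simp only [Sym2.eq_iff, Option.some.injEq] at hab
    rcases hab with ⟨h, _⟩ | ⟨h1, h2⟩
    · exact h
    · exfalso
      have e1 := congrArg Fin.val h1
      have e2 := congrArg Fin.val h2
      have ha := a.isLt; have hb := b.isLt
      rcases hsplit a with h4 | ⟨h4, h5⟩ <;> rcases hsplit b with h6 | ⟨h6, h7⟩ <;> omega
  have hScard : S.card = (univ.filter (fun a : Fin (n - 1) => c (some a) = c none)).card :=
    Finset.card_image_of_injective _ hspokeinj
  have hRcard : R.card
      = (univ.filter (fun a : Fin (n - 1) => c (some a) = c (some (a + 1)))).card :=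
    Finset.card_image_of_injective _ hriminj
  have hdisj : Disjoint S R := by
    rw [Finset.disjoint_left]
    rintro e he1 he2
    simp only [hS, hR, Finset.mem_image] at he1 he2
    obtain ⟨a, _, rfl⟩ := he1
    obtain ⟨b, _, hb⟩ := he2
    rw [Sym2.eq_iff] at hb
    rcases hb with ⟨h, _⟩ | ⟨_, h⟩ <;> exact absurd h (by simp)
  have hsub : ↑(S ∪ R) ⊆ Bad := by
    intro e he
    rw [Finset.coe_union, Set.mem_union] at he
    rcases he with he | he
    · simp only [hS, Finset.coe_image, Set.mem_image, Finset.mem_coe,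
        Finset.mem_filter] at he
      obtain ⟨a, ⟨_, ha⟩, rfl⟩ := he
      constructor
      · exact Or.inl ⟨rfl, by simp⟩
      · simp only [Sym2.map_pair_eq, Sym2.mk_isDiag_iff]
        exact ha.symm
    · simp only [hR, Finset.coe_image, Set.mem_image, Finset.mem_coe,
        Finset.mem_filter] at he
      obtain ⟨a, ⟨_, ha⟩, rfl⟩ := he
      constructor
      · refine Or.inr (Or.inr ⟨a, a + 1, rfl, rfl, hne a, Or.inl ?_⟩)
        rw [hvadd]
      · simp only [Sym2.map_pair_eq, Sym2.mk_isDiag_iff]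
        exact ha
  have hfin : Bad.Finite := Set.toFinite _
  have hmain : (S ∪ R).card ≤ badCount (wheelGraph (n - 1)) c := by
    rw [badCount, ← hBad]
    calc (S ∪ R).card = (↑(S ∪ R) : Set (Sym2 (Option (Fin (n - 1))))).ncard :=
      (Set.ncard_coe_finset _).symm
    _ ≤ Bad.ncard := Set.ncard_le_ncard hsub hfin
  rw [Finset.card_union_of_disjoint hdisj, hScard, hRcard] at hmain
  have hkey := wheel_key_count (n - 1) (fun a => c (some a)) (c none)
  omega
end

section
/- For the wheel W_n on n > 3 vertices and every integer k with ⌊n/2⌋ ≤ k ≤ 2n−5, there exists a 2-coloring of the vertices of W_n with exactly k monochromatic edges. -/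
open Finset


lemma val_add_one_mod {m : ℕ} (hm : 3 ≤ m) (a : Fin m) :
    haveI : NeZero m := ⟨by omega⟩
    ((a + 1 : Fin m)).val = (a.val + 1) % m := by
  haveI : NeZero m := ⟨by omega⟩
  rw [Fin.add_def, Fin.val_one']
  rw [Nat.mod_eq_of_lt (by omega : 1 < m)]

lemma card_val_filter (m : ℕ) (p : ℕ → Prop) [DecidablePred p] :
    (Finset.univ.filter (fun a : Fin m => p a.val)).card
      = ((Finset.range m).filter p).card := by
  apply Finset.card_nbij (fun a => a.val)
  · intro a ha
    simp only [mem_coe, mem_filter, mem_univ, true_and, mem_range] at *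
    exact ⟨a.isLt, ha⟩
  · intro a _ b _ h
    exact Fin.ext h
  · intro i hi
    simp only [mem_coe, mem_filter, mem_range] at hi
    exact ⟨⟨i, hi.1⟩, by simp [hi.2], rfl⟩

lemma badCount_wheel (m : ℕ) (hm : 3 ≤ m) (c : Option (Fin m) → Fin 2) :
    haveI : NeZero m := ⟨by omega⟩
    badCount (wheelGraph m) c
      = (Finset.univ.filter (fun a : Fin m => c (some a) = c none)).card
        + (Finset.univ.filter (fun a : Fin m => c (some a) = c (some (a + 1)))).card := by
  haveI : NeZero m := ⟨by omega⟩
  classical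
  set A : Set (Sym2 (Option (Fin m))) :=
    (fun a : Fin m => s(none, some a)) '' {a | c (some a) = c none} with hA
  set B : Set (Sym2 (Option (Fin m))) :=
    (fun a : Fin m => s(some a, some (a + 1))) '' {a | c (some a) = c (some (a + 1))} with hB
  have hne : ∀ a : Fin m, a ≠ a + 1 := by
    intro a h
    have hv := congrArg Fin.val h
    rw [val_add_one_mod hm] at hv
    rcases Nat.lt_or_ge (a.val + 1) m with h1 | h1
    · rw [Nat.mod_eq_of_lt h1] at hv; omega
    · have : a.val + 1 = m := by omega
      rw [this, Nat.mod_self] at hv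
      have := a.isLt; omega
  have hset : {e | e ∈ (wheelGraph m).edgeSet ∧ (Sym2.map c e).IsDiag} = A ∪ B := by
    ext e
    induction e using Sym2.ind with
    | _ v w =>
      simp only [Set.mem_setOf_eq, SimpleGraph.mem_edgeSet, Sym2.map_pair_eq,
        Sym2.isDiag_iff_proj_eq, Set.mem_union]
      constructor
      · rintro ⟨(⟨rfl, h2⟩ | ⟨rfl, h2⟩ | ⟨a, b, rfl, rfl, hab, hcyc⟩), hd⟩
        · obtain ⟨a, rfl⟩ := Option.ne_none_iff_exists'.mp h2
          exact Or.inl ⟨a, hd.symm, rfl⟩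
        · obtain ⟨a, rfl⟩ := Option.ne_none_iff_exists'.mp h2
          exact Or.inl ⟨a, hd, Sym2.eq_swap⟩
        · rcases hcyc with h | h
          · have hb : b = a + 1 := Fin.ext (by rw [val_add_one_mod hm, h])
            subst hb
            exact Or.inr ⟨a, hd, rfl⟩
          · have ha : a = b + 1 := Fin.ext (by rw [val_add_one_mod hm, h])
            subst ha
            exact Or.inr ⟨b, hd.symm, Sym2.eq_swap⟩
      · rintro (⟨a, ha, he⟩ | ⟨a, ha, he⟩)
        · rw [Sym2.eq_iff] at he
          rcases he with ⟨rfl, rfl⟩ | ⟨rfl, rfl⟩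
          · exact ⟨Or.inl ⟨rfl, by simp⟩, ha.symm⟩
          · exact ⟨Or.inr (Or.inl ⟨rfl, by simp⟩), ha⟩
        · rw [Sym2.eq_iff] at he
          have hadj : (wheelGraph m).Adj (some a) (some (a + 1)) :=
            Or.inr (Or.inr ⟨a, a + 1, rfl, rfl, hne a, Or.inl (val_add_one_mod hm a).symm⟩)
          rcases he with ⟨rfl, rfl⟩ | ⟨rfl, rfl⟩
          · exact ⟨hadj, ha⟩
          · exact ⟨hadj.symm, ha.symm⟩
  have hdisj : Disjoint A B := by
    rw [Set.disjoint_left]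
    rintro x ⟨a, _, rfl⟩ ⟨b, _, hx⟩
    rw [Sym2.eq_iff] at hx
    rcases hx with ⟨h, _⟩ | ⟨_, h⟩ <;> cases h
  have hinjA : Set.InjOn (fun a : Fin m => s(Option.none, some a)) {a | c (some a) = c none} := by
    intro a _ b _ h
    simp only [Sym2.eq_iff] at h
    rcases h with ⟨_, h⟩ | ⟨h, _⟩
    · exact Option.some_injective _ h
    · cases h
  have hinjB : Set.InjOn (fun a : Fin m => s(some a, some (a + 1)))
      {a | c (some a) = c (some (a + 1))} := by
    intro a _ b _ h
    simp only [Sym2.eq_iff] at h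
    rcases h with ⟨h, _⟩ | ⟨h1, h2⟩
    · exact Option.some_injective _ h
    · exfalso
      have h1' : a = b + 1 := Option.some_injective _ h1
      have h2' : a + 1 = b := Option.some_injective _ h2
      have : b + 1 + 1 = b := by rw [← h1', h2']
      have hv := congrArg Fin.val this
      rw [val_add_one_mod hm, val_add_one_mod hm] at hv
      have hb := b.isLt
      rcases Nat.lt_or_ge (b.val + 1) m with hx | hx
      · rw [Nat.mod_eq_of_lt hx] at hv
        rcases Nat.lt_or_ge (b.val + 2) m with hy | hy
        · rw [Nat.mod_eq_of_lt hy] at hv; omega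
        · have : b.val + 2 = m ∨ b.val + 2 = m + 1 := by omega
          rcases this with h | h <;>
            · rw [h] at hv; simp [Nat.mod_self, Nat.add_mod_left] at hv <;> omega
      · have : b.val + 1 = m := by omega
        rw [this, Nat.mod_self, Nat.mod_eq_of_lt (by omega)] at hv
        omega
  rw [badCount, hset, Set.ncard_union_eq hdisj (Set.toFinite A) (Set.toFinite B),
    hA, hB, Set.ncard_image_of_injOn hinjA, Set.ncard_image_of_injOn hinjB,
    Set.ncard_eq_toFinset_card', Set.ncard_eq_toFinset_card', Set.toFinset_setOf,
    Set.toFinset_setOf]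


lemma count_lt (m s : ℕ) (hs : s ≤ m) :
    ((range m).filter (fun i => i < s)).card = s := by
  have : (range m).filter (fun i => i < s) = range s := by
    ext i; simp only [mem_filter, mem_range]; omega
  rw [this, card_range]

lemma count_even (m s : ℕ) (hs : 2 * s ≤ m) :
    ((range m).filter (fun i => i % 2 = 0 ∧ i < 2 * s)).card = s := by
  have : (range m).filter (fun i => i % 2 = 0 ∧ i < 2 * s)
      = (range s).image (fun j => 2 * j) := by
    ext i
    simp only [mem_filter, mem_range, mem_image]
    constructor
    · rintro ⟨_, h1, h2⟩; exact ⟨i / 2, by omega, by omega⟩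
    · rintro ⟨j, hj, rfl⟩; omega
  rw [this, card_image_of_injective _ (fun a b h => by omega), card_range]

lemma count_rimA (m s : ℕ) (hm : 3 ≤ m) (hs1 : 1 ≤ s) (hs2 : s ≤ m - 1) :
    ((range m).filter (fun i => (i < s ↔ (i + 1) % m < s))).card = m - 2 := by
  have hneg : (range m).filter (fun i => ¬(i < s ↔ (i + 1) % m < s)) = {s - 1, m - 1} := by
    ext i
    simp only [mem_filter, mem_range, mem_insert, mem_singleton]
    constructor
    · rintro ⟨hi, hq⟩
      rcases Nat.lt_or_ge (i + 1) m with h | h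
      · rw [Nat.mod_eq_of_lt h] at hq; omega
      · have : i + 1 = m := by omega
        rw [this, Nat.mod_self] at hq; omega
    · rintro (rfl | rfl)
      · have h : s - 1 + 1 < m := by omega
        rw [Nat.mod_eq_of_lt h]
        exact ⟨by omega, by omega⟩
      · have h : m - 1 + 1 = m := by omega
        rw [h, Nat.mod_self]
        exact ⟨by omega, by omega⟩
  have htot : ((range m).filter (fun i => (i < s ↔ (i + 1) % m < s))).card
      + ((range m).filter (fun i => ¬(i < s ↔ (i + 1) % m < s))).card = (range m).card :=
    Finset.card_filter_add_card_filter_not _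
  rw [hneg, card_range] at htot
  have h2 : ({s - 1, m - 1} : Finset ℕ).card = 2 := by
    rw [card_insert_of_notMem (by simp; omega), card_singleton]
  omega

lemma count_rimB (m s : ℕ) (hm : 3 ≤ m) (hs : 2 * s ≤ m) :
    ((range m).filter (fun i =>
      ((i % 2 = 0 ∧ i < 2 * s) ↔ ((i + 1) % m % 2 = 0 ∧ (i + 1) % m < 2 * s)))).card
      = m - 2 * s := by
  set P : ℕ → Prop := fun i => i % 2 = 0 ∧ i < 2 * s with hP
  have nb : ∀ i < m, ¬(P i ∧ P ((i + 1) % m)) := by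
    intro i hi ⟨h1, h2⟩
    rcases Nat.lt_or_ge (i + 1) m with h | h
    · rw [Nat.mod_eq_of_lt h] at h2
      rcases h1 with ⟨ha, _⟩; rcases h2 with ⟨hb, _⟩; omega
    · have : i + 1 = m := by omega
      rw [this, Nat.mod_self] at h2
      rcases h1 with ⟨ha, hb⟩; rcases h2 with ⟨_, hc⟩; omega
  have hneg : (range m).filter (fun i => ¬(P i ↔ P ((i + 1) % m)))
      = ((range m).filter P) ∪ ((range m).filter (fun i => P ((i + 1) % m))) := by
    ext i
    simp only [mem_filter, mem_range, mem_union]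
    constructor
    · rintro ⟨hi, hq⟩
      by_cases h1 : P i
      · exact Or.inl ⟨hi, h1⟩
      · by_cases h2 : P ((i + 1) % m)
        · exact Or.inr ⟨hi, h2⟩
        · exact absurd (iff_of_false h1 h2) hq
    · rintro (⟨hi, h1⟩ | ⟨hi, h1⟩)
      · have h2 : ¬ P ((i + 1) % m) := fun h => nb i hi ⟨h1, h⟩
        exact ⟨hi, fun h => h2 (h.mp h1)⟩
      · have h2 : ¬ P i := fun h => nb i hi ⟨h, h1⟩
        exact ⟨hi, fun h => h2 (h.mpr h1)⟩
  have hdisj : Disjoint ((range m).filter P) ((range m).filter (fun i => P ((i + 1) % m))) := by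
    rw [Finset.disjoint_left]
    intro i hi h2
    simp only [mem_filter, mem_range] at hi h2
    exact nb i hi.1 ⟨hi.2, h2.2⟩
  have hc2 : ((range m).filter (fun i => P ((i + 1) % m))).card = ((range m).filter P).card := by
    apply Finset.card_nbij (fun i => (i + 1) % m)
    · intro i hi
      simp only [mem_coe, mem_filter, mem_range] at hi ⊢
      exact ⟨Nat.mod_lt _ (by omega), hi.2⟩
    · intro i hi j hj h
      have h' : (i + 1) % m = (j + 1) % m := h
      simp only [mem_coe, mem_filter, mem_range] at hi hj
      rcases Nat.lt_or_ge (i + 1) m with ha | ha <;> rcases Nat.lt_or_ge (j + 1) m with hb | hb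
      · rw [Nat.mod_eq_of_lt ha, Nat.mod_eq_of_lt hb] at h'; omega
      · have hj1 : j + 1 = m := by omega
        rw [Nat.mod_eq_of_lt ha, hj1, Nat.mod_self] at h'; omega
      · have hi1 : i + 1 = m := by omega
        rw [hi1, Nat.mod_self, Nat.mod_eq_of_lt hb] at h'; omega
      · omega
    · intro j hj
      simp only [mem_coe, mem_filter, mem_range] at hj
      by_cases h : j = 0
      · subst h
        have h1 : m - 1 + 1 = m := by omega
        refine ⟨m - 1, ?_, ?_⟩
        · simp only [mem_coe, mem_filter, mem_range]
          refine ⟨by omega, ?_⟩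
          rw [h1, Nat.mod_self]; exact hj.2
        · show (m - 1 + 1) % m = 0
          rw [h1, Nat.mod_self]
      · have h1 : j - 1 + 1 = j := by omega
        refine ⟨j - 1, ?_, ?_⟩
        · simp only [mem_coe, mem_filter, mem_range]
          refine ⟨by omega, ?_⟩
          rw [h1, Nat.mod_eq_of_lt hj.1]; exact hj.2
        · show (j - 1 + 1) % m = j
          rw [h1, Nat.mod_eq_of_lt hj.1]
  have hcard : ((range m).filter P).card = s := count_even m s hs
  have htot : ((range m).filter (fun i => (P i ↔ P ((i + 1) % m)))).card
      + ((range m).filter (fun i => ¬(P i ↔ P ((i + 1) % m)))).card = (range m).card :=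
    Finset.card_filter_add_card_filter_not _
  rw [hneg, card_range, Finset.card_union_of_disjoint hdisj, hc2, hcard] at htot
  have : ((range m).filter (fun i => (P i ↔ P ((i + 1) % m)))).card = m - 2 * s := by omega
  exact this

/-- For every `⌊n/2⌋ ≤ k ≤ 2n - 5` the wheel `W_n` (`n > 3`) has a 2-coloring with
exactly `k` monochromatic edges. -/
theorem wheel_two_coloring_exact_bad_edges (n : ℕ) (hn : 3 < n)
    (k : ℕ) (hk1 : n / 2 ≤ k) (hk2 : k ≤ 2 * n - 5) :
    ∃ c : Option (Fin (n - 1)) → Fin 2, badCount (wheelGraph (n - 1)) c = k := by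
  set m := n - 1 with hmdef
  have hm : 3 ≤ m := by omega
  haveI : NeZero m := ⟨by omega⟩
  rcases Nat.lt_or_ge k (m - 1) with hcase | hcase
  · -- Family B : k = m - s, s = m - k, with 2 * s ≤ m
    set s := m - k with hsdef
    have hs : 2 * s ≤ m := by omega
    refine ⟨fun v => v.elim 0 (fun a : Fin m => if a.val % 2 = 0 ∧ a.val < 2 * s then 0 else 1), ?_⟩
    rw [badCount_wheel m hm]
    have h1 : (Finset.univ.filter (fun a : Fin m =>
        (Option.some a).elim (0 : Fin 2) (fun a : Fin m => if a.val % 2 = 0 ∧ a.val < 2 * s then 0 else 1)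
          = (Option.none).elim (0 : Fin 2)
            (fun a : Fin m => if a.val % 2 = 0 ∧ a.val < 2 * s then 0 else 1))).card = s := by
      have he : (Finset.univ.filter (fun a : Fin m =>
          (Option.some a).elim (0 : Fin 2)
            (fun a : Fin m => if a.val % 2 = 0 ∧ a.val < 2 * s then 0 else 1)
            = (Option.none).elim (0 : Fin 2)
              (fun a : Fin m => if a.val % 2 = 0 ∧ a.val < 2 * s then 0 else 1)))
          = Finset.univ.filter (fun a : Fin m => a.val % 2 = 0 ∧ a.val < 2 * s) := by
        apply Finset.filter_congr
        intro a _
        show ((if a.val % 2 = 0 ∧ a.val < 2 * s then (0 : Fin 2) else 1) = 0) ↔ _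
        by_cases h : a.val % 2 = 0 ∧ a.val < 2 * s <;> simp [h]
      rw [he, card_val_filter m (fun i => i % 2 = 0 ∧ i < 2 * s), count_even m s hs]
    have h2 : (Finset.univ.filter (fun a : Fin m =>
        (Option.some a).elim (0 : Fin 2) (fun a : Fin m => if a.val % 2 = 0 ∧ a.val < 2 * s then 0 else 1)
          = (Option.some (a + 1)).elim (0 : Fin 2)
            (fun a : Fin m => if a.val % 2 = 0 ∧ a.val < 2 * s then 0 else 1))).card = m - 2 * s := by
      have he : (Finset.univ.filter (fun a : Fin m =>
          (Option.some a).elim (0 : Fin 2)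
            (fun a : Fin m => if a.val % 2 = 0 ∧ a.val < 2 * s then 0 else 1)
            = (Option.some (a + 1)).elim (0 : Fin 2)
              (fun a : Fin m => if a.val % 2 = 0 ∧ a.val < 2 * s then 0 else 1)))
          = Finset.univ.filter (fun a : Fin m =>
              ((a.val % 2 = 0 ∧ a.val < 2 * s)
                ↔ ((a.val + 1) % m % 2 = 0 ∧ (a.val + 1) % m < 2 * s))) := by
        apply Finset.filter_congr
        intro a _
        show ((if a.val % 2 = 0 ∧ a.val < 2 * s then (0 : Fin 2) else 1)
          = (if (a + 1 : Fin m).val % 2 = 0 ∧ (a + 1 : Fin m).val < 2 * s then 0 else 1)) ↔ _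
        rw [val_add_one_mod hm]
        by_cases ha : a.val % 2 = 0 ∧ a.val < 2 * s <;>
          by_cases hb : (a.val + 1) % m % 2 = 0 ∧ (a.val + 1) % m < 2 * s <;>
          simp [ha, hb]
      rw [he, card_val_filter m
        (fun i => ((i % 2 = 0 ∧ i < 2 * s) ↔ ((i + 1) % m % 2 = 0 ∧ (i + 1) % m < 2 * s))),
        count_rimB m s hm hs]
    rw [h1, h2]
    omega
  · -- Family A : arc of length s = k - (m - 2), 1 ≤ s ≤ m - 1
    set s := k - (m - 2) with hsdef
    have hs1 : 1 ≤ s := by omega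
    have hs2 : s ≤ m - 1 := by omega
    refine ⟨fun v => v.elim 0 (fun a : Fin m => if a.val < s then 0 else 1), ?_⟩
    rw [badCount_wheel m hm]
    have h1 : (Finset.univ.filter (fun a : Fin m =>
        (Option.some a).elim (0 : Fin 2) (fun a : Fin m => if a.val < s then 0 else 1)
          = (Option.none).elim (0 : Fin 2) (fun a : Fin m => if a.val < s then 0 else 1))).card = s := by
      have he : (Finset.univ.filter (fun a : Fin m =>
          (Option.some a).elim (0 : Fin 2) (fun a : Fin m => if a.val < s then 0 else 1)
            = (Option.none).elim (0 : Fin 2) (fun a : Fin m => if a.val < s then 0 else 1)))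
          = Finset.univ.filter (fun a : Fin m => a.val < s) := by
        apply Finset.filter_congr
        intro a _
        show ((if a.val < s then (0 : Fin 2) else 1) = 0) ↔ _
        by_cases h : a.val < s <;> simp [h]
      rw [he, card_val_filter m (fun i => i < s), count_lt m s (by omega)]
    have h2 : (Finset.univ.filter (fun a : Fin m =>
        (Option.some a).elim (0 : Fin 2) (fun a : Fin m => if a.val < s then 0 else 1)
          = (Option.some (a + 1)).elim (0 : Fin 2)
            (fun a : Fin m => if a.val < s then 0 else 1))).card = m - 2 := by
      have he : (Finset.univ.filter (fun a : Fin m =>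
          (Option.some a).elim (0 : Fin 2) (fun a : Fin m => if a.val < s then 0 else 1)
            = (Option.some (a + 1)).elim (0 : Fin 2) (fun a : Fin m => if a.val < s then 0 else 1)))
          = Finset.univ.filter (fun a : Fin m => (a.val < s ↔ (a.val + 1) % m < s)) := by
        apply Finset.filter_congr
        intro a _
        show ((if a.val < s then (0 : Fin 2) else 1)
          = (if (a + 1 : Fin m).val < s then 0 else 1)) ↔ _
        rw [val_add_one_mod hm]
        by_cases ha : a.val < s <;> by_cases hb : (a.val + 1) % m < s <;> simp [ha, hb]
      rw [he, card_val_filter m (fun i => (i < s ↔ (i + 1) % m < s)), count_rimA m s hm hs1 hs2]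
    rw [h1, h2]
    omega
end

section
/- For the wheel W_n on n > 3 vertices and every integer k with 1 ≤ k < ⌊n/2⌋, there exists a 3-coloring of the vertices of W_n with exactly k monochromatic edges, but no 2-coloring with exactly k monochromatic edges. -/
namespace WheelAux

variable {m : ℕ}

/-- successor on the rim -/
def wsucc (a : Fin m) : Fin m := ⟨(a.val + 1) % m, Nat.mod_lt _ a.pos⟩

@[simp] lemma wsucc_val (a : Fin m) : (wsucc a).val = (a.val + 1) % m := rfl

lemma wsucc_val_cases (a : Fin m) :
    (a.val + 1) % m = a.val + 1 ∨ (a.val + 1) % m = a.val + 1 - m ∧ m ≤ a.val + 1 := by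
  rcases Nat.lt_or_ge (a.val + 1) m with h' | h'
  · exact Or.inl (Nat.mod_eq_of_lt h')
  · have ha := a.isLt
    exact Or.inr ⟨by rw [Nat.mod_eq_sub_mod h', Nat.mod_eq_of_lt (by omega)], h'⟩

def spoke (a : Fin m) : Sym2 (Option (Fin m)) := s(none, some a)

def rim (a : Fin m) : Sym2 (Option (Fin m)) := s(some a, some (wsucc a))

lemma spoke_injective : Function.Injective (spoke (m := m)) := by
  intro a b h
  simp only [spoke, Sym2.eq_iff] at h
  rcases h with ⟨-, h⟩ | ⟨h, -⟩
  · exact Option.some_injective _ h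
  · exact absurd h (by simp)

lemma wsucc_ne (hm : 3 ≤ m) (a : Fin m) : wsucc a ≠ a := by
  intro h
  have h2 := congrArg Fin.val h
  simp only [wsucc_val] at h2
  have ha := a.isLt
  rcases wsucc_val_cases a with h' | ⟨h', h''⟩ <;> omega

lemma rim_injective (hm : 3 ≤ m) : Function.Injective (rim (m := m)) := by
  intro a b h
  simp only [rim, Sym2.eq_iff] at h
  rcases h with ⟨h, -⟩ | ⟨h1, h2⟩
  · exact Option.some_injective _ h
  · -- a = wsucc b and wsucc a = b
    have h1 := congrArg Fin.val (Option.some_injective _ h1)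
    have h2 := congrArg Fin.val (Option.some_injective _ h2)
    simp only [wsucc_val] at h1 h2
    have ha := a.isLt; have hb := b.isLt
    have e1 := wsucc_val_cases a
    have e2 := wsucc_val_cases b
    exact Fin.ext (by omega)

lemma spoke_ne_rim (a b : Fin m) : spoke a ≠ rim b := by
  intro h
  rw [spoke, rim, Sym2.eq_iff] at h
  rcases h with ⟨h, -⟩ | ⟨h, -⟩ <;> exact absurd h (by simp)

lemma mem_edgeSet_iff (hm : 3 ≤ m) (e : Sym2 (Option (Fin m))) :
    e ∈ (wheelGraph m).edgeSet ↔ (∃ a, e = spoke a) ∨ (∃ a, e = rim a) := by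
  induction e using Sym2.ind with
  | _ v w =>
    rw [SimpleGraph.mem_edgeSet]
    constructor
    · rintro (⟨h1, h2⟩ | ⟨h1, h2⟩ | ⟨a, b, h1, h2, h3, h4⟩)
      · subst h1
        obtain ⟨a, rfl⟩ := Option.ne_none_iff_exists'.mp h2
        exact Or.inl ⟨a, rfl⟩
      · subst h1
        obtain ⟨a, rfl⟩ := Option.ne_none_iff_exists'.mp h2
        exact Or.inl ⟨a, Sym2.eq_swap⟩
      · subst h1; subst h2
        rcases h4 with h4 | h4
        · have hb : wsucc a = b := Fin.ext h4
          exact Or.inr ⟨a, by rw [rim, hb]⟩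
        · have hb : wsucc b = a := Fin.ext h4
          exact Or.inr ⟨b, by rw [rim, hb, Sym2.eq_swap]⟩
    · rintro (⟨a, h⟩ | ⟨a, h⟩)
      · rw [spoke, Sym2.eq_iff] at h
        rcases h with ⟨rfl, rfl⟩ | ⟨rfl, rfl⟩
        · exact Or.inl ⟨rfl, by simp⟩
        · exact Or.inr (Or.inl ⟨rfl, by simp⟩)
      · rw [rim, Sym2.eq_iff] at h
        rcases h with ⟨rfl, rfl⟩ | ⟨rfl, rfl⟩
        · exact Or.inr (Or.inr ⟨a, wsucc a, rfl, rfl, (wsucc_ne hm a).symm, Or.inl rfl⟩)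
        · exact Or.inr (Or.inr ⟨wsucc a, a, rfl, rfl, wsucc_ne hm a, Or.inr rfl⟩)


lemma badCount_eq {α : Type*} [DecidableEq α] (hm : 3 ≤ m) (c : Option (Fin m) → α) :
    badCount (wheelGraph m) c =
      (Finset.univ.filter fun a : Fin m => c (some a) = c none).card +
      (Finset.univ.filter fun a : Fin m => c (some a) = c (some (wsucc a))).card := by
  classical
  set A : Finset (Fin m) := Finset.univ.filter fun a : Fin m => c (some a) = c none with hA
  set B : Finset (Fin m) := Finset.univ.filter fun a : Fin m => c (some a) = c (some (wsucc a))
    with hB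
  have hset : {e ∈ (wheelGraph m).edgeSet | (Sym2.map c e).IsDiag} =
      ↑(A.image spoke ∪ B.image rim) := by
    ext e
    simp only [Set.mem_setOf_eq, Finset.coe_union, Set.mem_union, Finset.coe_image,
      Set.mem_image, Finset.mem_coe, hA, hB, Finset.mem_filter, Finset.mem_univ, true_and,
      mem_edgeSet_iff hm]
    constructor
    · rintro ⟨(⟨a, rfl⟩ | ⟨a, rfl⟩), hd⟩
      · refine Or.inl ⟨a, ?_, rfl⟩
        rw [spoke, Sym2.map_pair_eq, Sym2.mk_isDiag_iff] at hd
        exact hd.symm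
      · refine Or.inr ⟨a, ?_, rfl⟩
        rw [rim, Sym2.map_pair_eq, Sym2.mk_isDiag_iff] at hd
        exact hd
    · rintro (⟨a, ha, rfl⟩ | ⟨a, ha, rfl⟩)
      · exact ⟨Or.inl ⟨a, rfl⟩, by rw [spoke, Sym2.map_pair_eq, Sym2.mk_isDiag_iff]; exact ha.symm⟩
      · exact ⟨Or.inr ⟨a, rfl⟩, by rw [rim, Sym2.map_pair_eq, Sym2.mk_isDiag_iff]; exact ha⟩
  rw [badCount, hset, Set.ncard_coe_finset, Finset.card_union_of_disjoint, 
    Finset.card_image_of_injective _ spoke_injective,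
    Finset.card_image_of_injective _ (rim_injective hm)]
  · rw [Finset.disjoint_left]
    rintro e he he'
    obtain ⟨a, -, rfl⟩ := Finset.mem_image.mp he
    obtain ⟨b, -, hb⟩ := Finset.mem_image.mp he'
    exact spoke_ne_rim a b hb.symm


lemma wsucc_injective : Function.Injective (wsucc (m := m)) := by
  intro a b h
  have h2 := congrArg Fin.val h
  simp only [wsucc_val] at h2
  have ha := a.isLt; have hb := b.isLt
  have e1 := wsucc_val_cases a
  have e2 := wsucc_val_cases b
  exact Fin.ext (by omega)

lemma two_coloring_lower (hm : 3 ≤ m) (c : Option (Fin m) → Fin 2) :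
    (m + 1) / 2 ≤ badCount (wheelGraph m) c := by
  classical
  rw [badCount_eq hm c]
  set A : Finset (Fin m) := Finset.univ.filter fun a : Fin m => c (some a) = c none with hA
  set B : Finset (Fin m) := Finset.univ.filter fun a : Fin m => c (some a) = c (some (wsucc a))
    with hB
  set A' : Finset (Fin m) := Finset.univ.filter fun a : Fin m => c (some (wsucc a)) = c none
    with hA'
  have hBc : B.card + (Finset.univ.filter fun a : Fin m =>
      ¬ (c (some a) = c (some (wsucc a)))).card = m := by
    rw [hB, Finset.card_filter_add_card_filter_not, Finset.card_univ, Fintype.card_fin]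
  have hsub : (Finset.univ.filter fun a : Fin m =>
      ¬ (c (some a) = c (some (wsucc a)))) ⊆ A ∪ A' := by
    intro a ha
    rw [Finset.mem_filter] at ha
    have key : ∀ x y z : Fin 2, x ≠ y → x = z ∨ y = z := by decide
    rcases key _ _ (c none) ha.2 with h | h
    · exact Finset.mem_union_left _ (Finset.mem_filter.mpr ⟨Finset.mem_univ _, h⟩)
    · exact Finset.mem_union_right _ (Finset.mem_filter.mpr ⟨Finset.mem_univ _, h⟩)
  have hAA' : A'.card = A.card := by
    apply Finset.card_bij (fun a _ => wsucc a)
    · intro a ha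
      rw [hA'] at ha
      rw [hA, Finset.mem_filter]
      exact ⟨Finset.mem_univ _, (Finset.mem_filter.mp ha).2⟩
    · intro a _ b _ h
      exact wsucc_injective h
    · intro b hb
      obtain ⟨a, rfl⟩ := Finite.surjective_of_injective wsucc_injective b
      refine ⟨a, ?_, rfl⟩
      rw [hA', Finset.mem_filter]
      exact ⟨Finset.mem_univ _, (Finset.mem_filter.mp hb).2⟩
  have h1 : (Finset.univ.filter fun a : Fin m =>
      ¬ (c (some a) = c (some (wsucc a)))).card ≤ A.card + A.card := by
    calc _ ≤ (A ∪ A').card := Finset.card_le_card hsub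
    _ ≤ A.card + A'.card := Finset.card_union_le _ _
    _ = A.card + A.card := by rw [hAA']
  have hAle : A.card ≤ m := by
    calc A.card ≤ Finset.univ.card := Finset.card_filter_le _ _
    _ = m := by rw [Finset.card_univ, Fintype.card_fin]
  omega


/-- the 3-coloring used for part 1 -/
def wcol (j k : ℕ) : Option (Fin m) → Fin 3
  | none => 2
  | some a => if a.val < j then 2 else if a.val ≤ k then 0
      else if (a.val - k) % 2 = 1 then 1 else 0

@[simp] lemma wcol_none (j k : ℕ) : wcol (m := m) j k none = 2 := rfl

@[simp] lemma wcol_some (j k : ℕ) (a : Fin m) :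
    wcol j k (some a) = if a.val < j then 2 else if a.val ≤ k then 0
      else if (a.val - k) % 2 = 1 then 1 else 0 := rfl

lemma card_filter_ico (j' k' : ℕ) (hk : k' ≤ m) :
    (Finset.univ.filter fun a : Fin m => j' ≤ a.val ∧ a.val < k').card = k' - j' := by
  rw [← Nat.card_Ico j' k']
  apply Finset.card_bij (fun a _ => a.val)
  · intro a ha
    rw [Finset.mem_filter] at ha
    rw [Finset.mem_Ico]
    exact ha.2
  · intro a _ b _ h
    exact Fin.ext h
  · intro b hb
    rw [Finset.mem_Ico] at hb
    exact ⟨⟨b, by omega⟩, Finset.mem_filter.mpr ⟨Finset.mem_univ _, by simpa using hb⟩, rfl⟩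

lemma exists_three_coloring (hm : 3 ≤ m) (k : ℕ) (hk1 : 1 ≤ k) (hk2 : k < (m + 1) / 2) :
    ∃ c : Option (Fin m) → Fin 3, badCount (wheelGraph m) c = k := by
  classical
  set j : ℕ := (m - k) % 2 with hj
  have hj1 : j ≤ 1 := by omega
  have hkm : k ≤ m - 2 := by omega
  refine ⟨wcol j k, ?_⟩
  rw [badCount_eq hm]
  have hAeq : (Finset.univ.filter fun a : Fin m => wcol j k (some a) = wcol j k (none : Option (Fin m)))
      = Finset.univ.filter fun a : Fin m => 0 ≤ a.val ∧ a.val < j := by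
    apply Finset.filter_congr
    intro a _
    have hv := a.isLt
    rw [wcol_some, wcol_none]
    split_ifs <;>
      first
        | exact iff_of_true rfl (by omega)
        | exact iff_of_false (by decide) (by omega)
  have hBeq : (Finset.univ.filter fun a : Fin m =>
        wcol j k (some a) = wcol j k (some (wsucc a)))
      = Finset.univ.filter fun a : Fin m => j ≤ a.val ∧ a.val < k := by
    apply Finset.filter_congr
    intro a _
    have hv := a.isLt
    have hw' := (wsucc a).isLt
    have hw := wsucc_val_cases a
    have hws : (wsucc a).val = (a.val + 1) % m := rfl
    rw [wcol_some, wcol_some]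
    rcases hw with hw | ⟨hw, hw2⟩ <;>
      rw [← hws] at hw <;>
      split_ifs <;>
        first
          | exact iff_of_true rfl (by omega)
          | exact iff_of_false (by decide) (by omega)
  rw [hAeq, hBeq, card_filter_ico 0 j (by omega), card_filter_ico j k (by omega)]
  omega

end WheelAux

/-- For every `1 ≤ k < ⌊n/2⌋` the wheel `W_n` (`n > 3`) has a 3-coloring with exactly
`k` monochromatic edges, but no 2-coloring with exactly `k` monochromatic edges. -/
theorem wheel_three_coloring_exact_bad_edges (n : ℕ) (hn : 3 < n)
    (k : ℕ) (hk1 : 1 ≤ k) (hk2 : k < n / 2) :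
    (∃ c : Option (Fin (n - 1)) → Fin 3, badCount (wheelGraph (n - 1)) c = k) ∧
    ¬ ∃ c : Option (Fin (n - 1)) → Fin 2, badCount (wheelGraph (n - 1)) c = k := by
  have hm : 3 ≤ n - 1 := by omega
  have hn' : n - 1 + 1 = n := by omega
  constructor
  · exact WheelAux.exists_three_coloring hm k hk1 (by rw [hn']; exact hk2)
  · rintro ⟨c, hc⟩
    have := WheelAux.two_coloring_lower hm c
    rw [hn', hc] at this
    omega
end

section
/- For the wheel W_n on n > 3 vertices and k ∈ {2n−4, 2n−3}, no vertex coloring of W_n (with any number of colors) has exactly k monochromatic edges. -/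
/-! ### Auxiliary lemmas -/

/-- The edges of the wheel, parametrized: `(false, a)` is the spoke at `a`,
`(true, a)` is the rim edge from `a` to `a + 1`. -/
def wheelF (m : ℕ) [NeZero m] : Bool × Fin m → Sym2 (Option (Fin m))
  | (false, a) => s(none, some a)
  | (true, a) => s(some a, some (a + 1))

lemma fin_add_one_val {m : ℕ} [NeZero m] (a : Fin m) : (a + 1).val = (a.val + 1) % m := by
  rcases m with _ | _ | m
  · exact absurd rfl (NeZero.ne 0)
  · omega
  · simp [Fin.add_def]

lemma succ_mod_eq {m : ℕ} (x : ℕ) (hx : x < m) :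
    (x + 1) % m = if x + 1 = m then 0 else x + 1 := by
  split
  · next h => rw [h, Nat.mod_self]
  · next h => exact Nat.mod_eq_of_lt (by omega)

lemma fin_succ_ne {m : ℕ} (hm : 3 ≤ m) [NeZero m] (a : Fin m) : a ≠ a + 1 := by
  intro h
  have := congrArg Fin.val h
  rw [fin_add_one_val, succ_mod_eq _ a.isLt] at this
  have := a.isLt
  split at * <;> omega

lemma wheel_adj_rim {m : ℕ} (hm : 3 ≤ m) [NeZero m] (a : Fin m) :
    (wheelGraph m).Adj (some a) (some (a + 1)) :=
  Or.inr (Or.inr ⟨a, a + 1, rfl, rfl, fin_succ_ne hm a, Or.inl (fin_add_one_val a).symm⟩)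

lemma wheel_edgeSet {m : ℕ} (hm : 3 ≤ m) [NeZero m] :
    (wheelGraph m).edgeSet = Set.range (wheelF m) := by
  apply Set.Subset.antisymm
  · intro e he
    induction e with
    | _ v w =>
      rw [SimpleGraph.mem_edgeSet] at he
      rcases he with ⟨h1, h2⟩ | ⟨h1, h2⟩ | ⟨a, b, h1, h2, h3, h4⟩
      · subst h1; obtain ⟨a, rfl⟩ := Option.ne_none_iff_exists'.mp h2
        exact ⟨(false, a), rfl⟩
      · subst h1; obtain ⟨a, rfl⟩ := Option.ne_none_iff_exists'.mp h2
        exact ⟨(false, a), Sym2.eq_swap⟩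
      · subst h1; subst h2
        rcases h4 with h4 | h4
        · have : a + 1 = b := by ext; rw [fin_add_one_val]; exact h4
          exact ⟨(true, a), by rw [← this]; rfl⟩
        · have : b + 1 = a := by ext; rw [fin_add_one_val]; exact h4
          exact ⟨(true, b), by rw [← this]; exact Sym2.eq_swap⟩
  · rintro e ⟨⟨b, a⟩, rfl⟩
    cases b
    · exact Or.inl ⟨rfl, by simp⟩
    · exact wheel_adj_rim hm a

lemma rim_edge_inj {m : ℕ} (hm : 3 ≤ m) [NeZero m] {a b : Fin m}
    (h : s(some a, some (a + 1)) = s(some b, some (b + 1))) : a = b := by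
  rw [Sym2.eq_iff] at h
  rcases h with ⟨h1, -⟩ | ⟨h1, h2⟩
  · exact Option.some_injective _ h1
  · exfalso
    have e1 : a = b + 1 := Option.some_injective _ h1
    have e2 : a + 1 = b := Option.some_injective _ h2
    have v1 := congrArg Fin.val e1
    have v2 := congrArg Fin.val e2
    rw [fin_add_one_val, succ_mod_eq _ b.isLt] at v1
    rw [fin_add_one_val, succ_mod_eq _ a.isLt] at v2
    have := a.isLt; have := b.isLt
    split at v1 <;> split at v2 <;> omega

lemma wheelF_inj {m : ℕ} (hm : 3 ≤ m) [NeZero m] :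
    Function.Injective (wheelF m) := by
  rintro ⟨b1, a1⟩ ⟨b2, a2⟩ h
  cases b1 <;> cases b2 <;> simp only [wheelF] at h
  · rw [Sym2.eq_iff] at h
    rcases h with ⟨-, h⟩ | ⟨h, -⟩ <;> simp_all
  · rw [Sym2.eq_iff] at h
    rcases h with ⟨h, -⟩ | ⟨h, -⟩ <;> simp_all
  · rw [Sym2.eq_iff] at h
    rcases h with ⟨h, -⟩ | ⟨-, h⟩ <;> simp_all
  · rw [rim_edge_inj hm h]

lemma wheel_edge_count {m : ℕ} (hm : 3 ≤ m) :
    (wheelGraph m).edgeSet.ncard = 2 * m := by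
  haveI : NeZero m := ⟨by omega⟩
  rw [wheel_edgeSet hm, ← Set.image_univ,
    Set.ncard_image_of_injective _ (wheelF_inj hm), Set.ncard_univ]
  simp [Nat.card_eq_fintype_card]

open Fin.NatCast in
lemma cyc_exists {m : ℕ} [NeZero m] (P : Fin m → Prop) (a b : Fin m)
    (ha : P a) (hb : ¬ P b) : ∃ i, P i ∧ ¬ P (i + 1) := by
  by_contra h
  push_neg at h
  have key : ∀ k : ℕ, P (a + (k : Fin m)) := by
    intro k
    induction k with
    | zero => simpa using ha
    | succ k ih =>
      have : (((k+1 : ℕ)) : Fin m) = (k : Fin m) + 1 := by push_cast; ring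
      rw [this, ← add_assoc]
      exact h _ ih
  have := key ((b - a).val)
  rw [Fin.cast_val_eq_self, add_sub_cancel] at this
  exact hb this

lemma three_le_ncard {β : Type*} {S : Set β} (hfin : S.Finite) {a b c : β}
    (ha : a ∈ S) (hb : b ∈ S) (hc : c ∈ S) (hab : a ≠ b) (hac : a ≠ c) (hbc : b ≠ c) :
    3 ≤ S.ncard := by
  have h1 : ({a, b, c} : Set β).ncard = 3 :=
    Set.ncard_eq_three.mpr ⟨a, b, c, hab, hac, hbc, rfl⟩
  rw [← h1]
  apply Set.ncard_le_ncard _ hfin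
  intro x hx
  rcases hx with rfl | rfl | rfl <;> assumption

/-- If some edge of the wheel is bichromatic, then at least three are: the wheel
is 3-edge-connected. -/
lemma three_bichromatic {m : ℕ} (hm : 3 ≤ m) {α : Type*} (c : Option (Fin m) → α)
    (h : ∃ v w, (wheelGraph m).Adj v w ∧ c v ≠ c w) :
    3 ≤ {e ∈ (wheelGraph m).edgeSet | ¬ (Sym2.map c e).IsDiag}.ncard := by
  haveI : NeZero m := ⟨by omega⟩
  set P : Fin m → Prop := fun i => c (some i) = c none with hP
  have memC : ∀ v w, (wheelGraph m).Adj v w → c v ≠ c w →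
      s(v, w) ∈ {e ∈ (wheelGraph m).edgeSet | ¬ (Sym2.map c e).IsDiag} := by
    intro v w hadj hne
    refine ⟨hadj, ?_⟩
    rw [Sym2.map_pair_eq, Sym2.mk_isDiag_iff]
    exact hne
  obtain ⟨v, w, hadj, hne⟩ := h
  -- there is a rim vertex not colored like the hub
  have hb0 : ∃ b0 : Fin m, ¬ P b0 := by
    rcases hadj with ⟨h1, h2⟩ | ⟨h1, h2⟩ | ⟨a, b, h1, h2, -, -⟩
    · subst h1
      obtain ⟨a, rfl⟩ := Option.ne_none_iff_exists'.mp h2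
      exact ⟨a, fun hp => hne hp.symm⟩
    · subst h1
      obtain ⟨a, rfl⟩ := Option.ne_none_iff_exists'.mp h2
      exact ⟨a, fun hp => hne hp⟩
    · subst h1; subst h2
      by_cases hpa : P a
      · exact ⟨b, fun hpb => hne (hpa.trans hpb.symm)⟩
      · exact ⟨a, hpa⟩
  obtain ⟨b0, hb0⟩ := hb0
  by_cases hex : ∃ a0 : Fin m, P a0
  · obtain ⟨a0, ha0⟩ := hex
    obtain ⟨i, hi, hi1⟩ := cyc_exists P a0 b0 ha0 hb0
    obtain ⟨j, hj, hj1⟩ := cyc_exists (fun k => ¬ P k) b0 a0 hb0 (not_not_intro ha0)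
    have hj1' : P (j + 1) := not_not.mp hj1
    refine three_le_ncard (Set.toFinite _)
      (memC _ _ (wheel_adj_rim hm i) ?_)
      (memC _ _ (wheel_adj_rim hm j) ?_)
      (memC (none) (some (i + 1)) (Or.inl ⟨rfl, by simp⟩) ?_) ?_ ?_ ?_
    · intro he; exact hi1 (he.symm.trans hi)
    · intro he; exact hj (he.trans hj1')
    · intro he; exact hi1 he.symm
    · intro he
      exact hj (rim_edge_inj hm he ▸ hi)
    · intro he
      rw [Sym2.eq_iff] at he
      rcases he with ⟨he, -⟩ | ⟨-, he⟩ <;> simp_all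
    · intro he
      rw [Sym2.eq_iff] at he
      rcases he with ⟨he, -⟩ | ⟨-, he⟩ <;> simp_all
  · push_neg at hex
    have spoke : ∀ k : ℕ, (hk : k < m) →
        s(none, some (⟨k, hk⟩ : Fin m)) ∈
          {e ∈ (wheelGraph m).edgeSet | ¬ (Sym2.map c e).IsDiag} := by
      intro k hk
      exact memC none (some ⟨k, hk⟩) (Or.inl ⟨rfl, by simp⟩)
        (fun he => hex ⟨k, hk⟩ he.symm)
    refine three_le_ncard (Set.toFinite _)
      (spoke 0 (by omega)) (spoke 1 (by omega)) (spoke 2 (by omega)) ?_ ?_ ?_ <;>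
      · intro he
        rw [Sym2.eq_iff] at he
        rcases he with ⟨-, he⟩ | ⟨he, -⟩ <;> simp_all

lemma wheel_badCount_aux {m : ℕ} (hm : 3 ≤ m) {α : Type*} (c : Option (Fin m) → α) :
    badCount (wheelGraph m) c ≠ 2 * m - 2 ∧ badCount (wheelGraph m) c ≠ 2 * m - 1 := by
  haveI : NeZero m := ⟨by omega⟩
  set B := {e ∈ (wheelGraph m).edgeSet | (Sym2.map c e).IsDiag} with hB
  set C := {e ∈ (wheelGraph m).edgeSet | ¬ (Sym2.map c e).IsDiag} with hC
  have hbad : badCount (wheelGraph m) c = B.ncard := rfl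
  have hunion : B ∪ C = (wheelGraph m).edgeSet := by
    ext e; by_cases hd : (Sym2.map c e).IsDiag <;> simp [hB, hC, hd]
  have hdisj : Disjoint B C := by
    rw [Set.disjoint_iff_inter_eq_empty]
    ext e; simp only [hB, hC, Set.mem_inter_iff, Set.mem_setOf_eq, Set.mem_empty_iff_false]
    tauto
  have hkey : B.ncard + C.ncard = 2 * m := by
    rw [← wheel_edge_count hm, ← hunion,
      Set.ncard_union_eq hdisj (Set.toFinite _) (Set.toFinite _)]
  rcases Set.eq_empty_or_nonempty C with hCe | hCne
  · rw [hCe, Set.ncard_empty] at hkey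
    rw [hbad]
    omega
  · obtain ⟨e, he⟩ := hCne
    have h3 : 3 ≤ C.ncard := by
      apply three_bichromatic hm c
      induction e with
      | _ v w =>
        obtain ⟨hadj, hnd⟩ := he
        rw [SimpleGraph.mem_edgeSet] at hadj
        rw [Sym2.map_pair_eq, Sym2.mk_isDiag_iff] at hnd
        exact ⟨v, w, hadj, hnd⟩
    rw [hbad]
    omega

/-- No vertex coloring of the wheel `W_n` (`n > 3`), with any set of colors, has
exactly `2n - 4` or exactly `2n - 3` monochromatic edges. -/
theorem wheel_no_coloring_near_all_bad_edges (n : ℕ) (hn : 3 < n)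
    {α : Type*} (c : Option (Fin (n - 1)) → α) :
    badCount (wheelGraph (n - 1)) c ≠ 2 * n - 4 ∧
    badCount (wheelGraph (n - 1)) c ≠ 2 * n - 3 := by
  have h := wheel_badCount_aux (m := n - 1) (by omega) c
  have h1 : 2 * (n - 1) - 2 = 2 * n - 4 := by omega
  have h2 : 2 * (n - 1) - 1 = 2 * n - 3 := by omega
  rw [h1, h2] at h
  exact h
end
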